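/- Let κ, σ, ρ, T be real numbers with σ ≠ 0 and T > 0, let u ∈ ℂ, and let η ∈ ℂ satisfy η² = (κ + uσρ)² − σ²u(u+1) and η ≠ 0. Define D(t) = η(e^{η(T−t)} + 1) + (κ + uσρ)(e^{η(T−t)} − 1), assume D(t) ≠ 0 for all t ∈ [0, T], and set ψ(t) = −u(u+1)(e^{η(T−t)} − 1)/D(t). Then the function Ψ(t) = 2η e^{η(T−t)/2}/D(t) satisfies Ψ(T) = 1 and, for every t ∈ [0, T], Ψ is differentiable at t with Ψ′(t) = (1/2)(κ + uσρ + σ²ψ(t))Ψ(t). -/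

import Mathlib

set_option maxHeartbeats 1000000

open Complex

theorem heston_Psi_solution (κ σ ρ T : ℝ) (hσ : σ ≠ 0) (hT : 0 < T)
    (u η : ℂ) (hη2 : η ^ 2 = ((κ : ℂ) + u * σ * ρ) ^ 2 - (σ : ℂ) ^ 2 * u * (u + 1))
    (hη : η ≠ 0)
    (D : ℝ → ℂ)
    (hD : ∀ t : ℝ, D t = η * (Complex.exp (η * (T - t)) + 1) +
      ((κ : ℂ) + u * σ * ρ) * (Complex.exp (η * (T - t)) - 1))
    (hD0 : ∀ t ∈ Set.Icc (0 : ℝ) T, D t ≠ 0)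
    (ψ : ℝ → ℂ)
    (hψ : ∀ t : ℝ, ψ t = -u * (u + 1) * (Complex.exp (η * (T - t)) - 1) / D t)
    (Ψ : ℝ → ℂ)
    (hΨ : ∀ t : ℝ, Ψ t = 2 * η * Complex.exp (η * (T - t) / 2) / D t) :
    Ψ T = 1 ∧
      ∀ t ∈ Set.Icc (0 : ℝ) T,
        HasDerivAt Ψ ((1 / 2) * ((κ : ℂ) + u * σ * ρ + (σ : ℂ) ^ 2 * ψ t) * Ψ t) t := by
  have hDfun : D = fun t : ℝ => η * (Complex.exp (η * (T - t)) + 1) +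
      ((κ : ℂ) + u * σ * ρ) * (Complex.exp (η * (T - t)) - 1) := funext hD
  have hΨfun : Ψ = fun t : ℝ => 2 * η * Complex.exp (η * (T - t) / 2) / D t := funext hΨ
  constructor
  · rw [hΨ T, hD T]
    simp [Complex.exp_zero]
    ring_nf
    rw [mul_inv_cancel₀ (by simpa using hη)]
  · intro t ht
    have hDt : D t ≠ 0 := hD0 t ht
    have hlin : HasDerivAt (fun s : ℝ => η * ((T : ℂ) - (s : ℂ))) (-η) t := by
      have h1 : HasDerivAt (fun s : ℝ => (s : ℂ)) 1 t := by
        simpa using (hasDerivAt_id t).ofReal_comp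
      have h2 := ((hasDerivAt_const t (T : ℂ)).sub h1).const_mul η
      simpa using h2
    have hE : HasDerivAt (fun s : ℝ => Complex.exp (η * ((T : ℂ) - (s : ℂ))))
        (Complex.exp (η * ((T : ℂ) - (t : ℂ))) * (-η)) t := hlin.cexp
    have hF : HasDerivAt (fun s : ℝ => Complex.exp (η * ((T : ℂ) - (s : ℂ)) / 2))
        (Complex.exp (η * ((T : ℂ) - (t : ℂ)) / 2) * (-η / 2)) t := by
      have := (hlin.div_const 2).cexp
      simpa using this
    have hDd : HasDerivAt D
        (η * (Complex.exp (η * (T - t)) * (-η)) +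
          ((κ : ℂ) + u * σ * ρ) * (Complex.exp (η * (T - t)) * (-η))) t := by
      rw [hDfun]
      exact ((hE.add_const 1).const_mul η).add ((hE.sub_const 1).const_mul _)
    have hN : HasDerivAt (fun s : ℝ => 2 * η * Complex.exp (η * ((T : ℂ) - (s : ℂ)) / 2))
        (2 * η * (Complex.exp (η * ((T : ℂ) - (t : ℂ)) / 2) * (-η / 2))) t := hF.const_mul _
    have hdiv := hN.div hDd hDt
    rw [hΨfun]
    convert hdiv using 1
    · rfl
    · rfl
    set E := Complex.exp (η * ((T : ℂ) - (t : ℂ))) with hEdef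
    set F := Complex.exp (η * ((T : ℂ) - (t : ℂ)) / 2) with hFdef
    set b : ℂ := (κ : ℂ) + u * σ * ρ with hb
    have hnum : η * F * (b * D t - (σ:ℂ)^2 * u * (u+1) * (E - 1)) =
        2 * η * (F * (-η / 2)) * D t -
          2 * η * F * (η * (E * (-η)) + b * (E * (-η))) := by
      rw [hD t, ← hEdef]
      linear_combination (-η * F * (E - 1)) * hη2
    simp only [hψ t, ← hEdef, ← hFdef]
    rw [eq_div_iff (pow_ne_zero 2 hDt), ← hnum]
    field_simp
    ring
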